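/- For reals P_v ≥ 0, C > 0, K ≥ 0, define R(x) = (1/2)·log₂(P_v + 1) − (1/2)·log₂( K·(P_v − x)/√(x+1) + √(x+1) ) for x ∈ [0, P_v]. If K·(P_v+1) > 1 then R is strictly increasing at x = 0; in particular R(x) > R(0) for sufficiently small x > 0, so the multiple-description rate strictly exceeds the common-description rate R(0). -/

import Mathlib

theorem stmt_9 (Pv C K : ℝ) (hPv : 0 ≤ Pv) (hC : 0 < C) (hK : 0 ≤ K)
    (R : ℝ → ℝ)
    (hR : ∀ x ∈ Set.Icc 0 Pv, R x = (1 / 2) * Real.logb 2 (Pv + 1)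
      - (1 / 2) * Real.logb 2 (K * (Pv - x) / Real.sqrt (x + 1) + Real.sqrt (x + 1)))
    (hcond : K * (Pv + 1) > 1) :
    ∃ ε > 0, ∀ x : ℝ, 0 < x → x < ε → x ≤ Pv → R 0 < R x := by
  have hKpos : 0 < K := by nlinarith
  set A : ℝ := K * Pv + 1 with hA
  have hA1 : 1 ≤ A := by nlinarith
  have hAgt : 2 * (1 - K) < A := by nlinarith
  -- choose ε
  obtain ⟨ε, hεpos, hε⟩ :
      ∃ ε > 0, ∀ x : ℝ, 0 < x → x < ε → (1 - K) * (Real.sqrt (x + 1) + 1) < A := by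
    rcases le_or_gt 1 K with hK1 | hK1
    · refine ⟨1, one_pos, fun x hx hxε => ?_⟩
      have hs : 0 < Real.sqrt (x + 1) + 1 := by positivity
      nlinarith
    · refine ⟨A / (1 - K) - 2, by rw [gt_iff_lt, sub_pos, lt_div_iff₀ (by linarith)]; linarith,
        fun x hx hxε => ?_⟩
      have hsle : Real.sqrt (x + 1) ≤ 1 + x := by
        have h := Real.sqrt_le_sqrt (show x + 1 ≤ (1 + x) ^ 2 by nlinarith)
        rwa [Real.sqrt_sq (by linarith)] at h
      have hx2 : x < A / (1 - K) - 2 := hxε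
      have : 2 + x < A / (1 - K) := by linarith
      have h2 : (1 - K) * (2 + x) < A := by
        have := (mul_lt_mul_iff_right₀ (show (0:ℝ) < 1 - K by linarith)).2 this
        rwa [mul_div_cancel₀ _ (show (1:ℝ) - K ≠ 0 by linarith)] at this
      nlinarith
  refine ⟨ε, hεpos, fun x hx hxε hxPv => ?_⟩
  have hmem : x ∈ Set.Icc 0 Pv := ⟨hx.le, hxPv⟩
  have h0mem : (0:ℝ) ∈ Set.Icc 0 Pv := ⟨le_refl _, hPv⟩
  set s : ℝ := Real.sqrt (x + 1) with hsdef
  have hs2 : s ^ 2 = x + 1 := Real.sq_sqrt (by linarith)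
  have hs1 : 1 < s := by
    nlinarith [Real.sqrt_nonneg (x + 1)]
  have hspos : 0 < s := by linarith
  have hkey : (1 - K) * (s + 1) < A := hε x hx hxε
  -- f(x) < A
  have hf_eq : K * (Pv - x) / s + s = (K * (Pv - x) + s ^ 2) / s := by
    field_simp
  have hflt : K * (Pv - x) / s + s < A := by
    rw [hf_eq, div_lt_iff₀ hspos]
    nlinarith [mul_pos (sub_pos.2 hkey) (sub_pos.2 hs1)]
  have hfpos : 0 < K * (Pv - x) / s + s := by
    have : 0 ≤ K * (Pv - x) / s := by
      apply div_nonneg (mul_nonneg hK (by linarith)) hspos.le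
    linarith
  have hlog : Real.logb 2 (K * (Pv - x) / s + s) < Real.logb 2 A :=
    Real.logb_lt_logb one_lt_two hfpos hflt
  have hR0 : R 0 = (1 / 2) * Real.logb 2 (Pv + 1) - (1 / 2) * Real.logb 2 A := by
    rw [hR 0 h0mem]
    norm_num [Real.sqrt_one]
    rfl
  have hRx := hR x hmem
  rw [hR0, hRx]
  have : Real.logb 2 (K * (Pv - x) / Real.sqrt (x + 1) + Real.sqrt (x + 1))
      < Real.logb 2 A := hlog
  linarith
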